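/- Let h > 0 be real, let z, b, u_0, λ ∈ ℂ with λ² − (2 + h²·z)·λ + 1 = 0 and |λ| < 1, and define u_j = u_0·λ^j for j = 0, 1, 2, …. Then: (i) (1/h)·( (u_{j+1} − u_j)/h − (u_j − u_{j−1})/h ) = z·u_j for every j ≥ 1; (ii) u_j → 0 as j → ∞; and (iii) if in addition (1/(h/2))·( (u_1 − u_0)/h + b ) = z·u_0, then ( z + (h·z/2)² )·u_0² = b². (Thus u_0 equals the discrete impedance F_h(z) = 1/√(z + (hz/2)²) applied to b, up to the choice of square-root branch.) -/

import Mathlib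

theorem stmt16 (h : ℝ) (hh : 0 < h) (z b u0 lam : ℂ)
    (hlam : lam ^ 2 - (2 + (h : ℂ) ^ 2 * z) * lam + 1 = 0) (hlam1 : ‖lam‖ < 1)
    (u : ℕ → ℂ) (hu : ∀ j, u j = u0 * lam ^ j) :
    (∀ j, 1 ≤ j →
      (1 / (h : ℂ)) * ((u (j + 1) - u j) / h - (u j - u (j - 1)) / h) = z * u j) ∧
    Filter.Tendsto u Filter.atTop (nhds 0) ∧
    ((1 / ((h : ℂ) / 2)) * ((u 1 - u 0) / h + b) = z * u 0 →
      (z + ((h : ℂ) * z / 2) ^ 2) * u 0 ^ 2 = b ^ 2) := by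
  have hh' : (h : ℂ) ≠ 0 := by exact_mod_cast hh.ne'
  refine ⟨?_, ?_, ?_⟩
  · rintro j hj
    obtain ⟨k, rfl⟩ := Nat.exists_eq_add_of_le' hj
    simp only [hu, Nat.add_sub_cancel]
    have hk2 : lam ^ (k + 1 + 1) = lam ^ k * lam ^ 2 := by ring
    have hk1 : lam ^ (k + 1) = lam ^ k * lam := by ring
    rw [hk2, hk1]
    field_simp
    linear_combination (u0 * lam ^ k) * hlam
  · have : u = fun j => u0 * lam ^ j := funext hu
    rw [this]
    have := (tendsto_pow_atTop_nhds_zero_of_norm_lt_one (x := lam) hlam1).const_mul u0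
    simpa using this
  · intro H
    simp only [hu, pow_one, pow_zero, mul_one] at H ⊢
    have H' : 2 * (u0 * lam - u0 + b * (h : ℂ)) = z * u0 * ((h : ℂ) * (h : ℂ)) := by
      field_simp at H
      linear_combination H
    have G4 : 4 * (h:ℂ)^2 * ((z + ((h:ℂ)*z/2)^2) * u0 ^ 2) = 4 * (h:ℂ)^2 * b ^ 2 := by
      linear_combination (-(2*b*(h:ℂ) + z*u0*(h:ℂ)^2 - 2*u0*lam + 2*u0)) * H' - 4*u0^2*hlam
    exact mul_left_cancel₀ (mul_ne_zero (by norm_num) (pow_ne_zero 2 hh')) G4
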